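/- Consider an n-party aggregation protocol over F_q in the anonymized model with encoder Enc: F_q → [ℓ]^m, which is correct (the analyzer always outputs the sum of the inputs). Then for any distinct x, x' ∈ F_q, the distributions Enc(x) and Enc(x') on [ℓ]^m have disjoint supports. -/
import Mathlib


/-- A correct one-round aggregation protocol in the anonymized model: each party `i` with
input `x i` and private randomness `r i` sends the `m` messages `Enc (x i) (r i)`; the
analyzer sees the (shuffled) multiset of all `n*m` messages and always outputs the sum.
Then the supports of the encodings of distinct inputs are disjoint. -/
theorem stmt13 (F : Type) [Field F] [Fintype F] [DecidableEq F]
    (ℓ m n : ℕ) (hℓ : 0 < ℓ) (hm : 0 < m) (hn : 2 ≤ n)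
    (R : Type) [Fintype R] [Nonempty R]
    (Enc : F → R → Fin m → Fin ℓ) (A : Multiset (Fin ℓ) → F)
    (hcorrect : ∀ (x : Fin n → F) (r : Fin n → R),
      A (∑ i : Fin n, Multiset.map (Enc (x i) (r i)) Finset.univ.val) = ∑ i, x i)
    (x x' : F) (hxx : x ≠ x') (r r' : R) :
    Enc x r ≠ Enc x' r' := by
  intro heq
  have hn0 : 0 < n := lt_of_lt_of_le (by norm_num) hn
  set i0 : Fin n := ⟨0, hn0⟩
  set X1 : Fin n → F := fun i => if i = i0 then x else 0 with hX1
  set X2 : Fin n → F := fun i => if i = i0 then x' else 0 with hX2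
  set R1 : Fin n → R := fun i => if i = i0 then r else r
  set R2 : Fin n → R := fun i => if i = i0 then r' else r
  have hms : (∑ i : Fin n, Multiset.map (Enc (X1 i) (R1 i)) Finset.univ.val)
      = ∑ i : Fin n, Multiset.map (Enc (X2 i) (R2 i)) Finset.univ.val := by
    apply Finset.sum_congr rfl
    intro i _
    by_cases h : i = i0 <;> simp [X1, X2, R1, R2, h, heq]
  have h1 := hcorrect X1 R1
  have h2 := hcorrect X2 R2
  rw [hms, h2] at h1
  have hs1 : (∑ i, X1 i) = x := by
    simp [hX1, Finset.sum_ite_eq']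
  have hs2 : (∑ i, X2 i) = x' := by
    simp [hX2, Finset.sum_ite_eq']
  rw [hs1, hs2] at h1
  exact hxx h1.symm
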